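/- If there exists a linear code of dimension k over GF(q) with exactly s distinct nonzero weights, then there exists a linear code of dimension k+1 over GF(q) with exactly q^k + s distinct nonzero weights. -/

import Mathlib

set_option linter.unusedSectionVars false
set_option linter.unnecessarySeqFocus false

open Finset

section Aux
variable {F : Type*} [Field F] [Fintype F] [DecidableEq F]

lemma hN_eq_sum {ι : Type*} [Fintype ι] (x : ι → F) :
    hammingNorm x = ∑ i, if x i ≠ 0 then 1 else 0 := by
  simp [hammingNorm, Finset.card_filter]

lemma hN_comp_equiv {ι κ : Type*} [Fintype ι] [Fintype κ] (e : ι ≃ κ) (x : κ → F) :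
    hammingNorm (x ∘ e) = hammingNorm x := by
  simp only [hammingNorm]
  exact Finset.card_bij' (fun i _ => e i) (fun j _ => e.symm j) (by simp) (by simp)
    (by simp) (by simp)

/-- transport a code on an arbitrary fintype index to a `Fin n'` index -/
lemma exists_code_fin {ι : Type*} [Fintype ι] (D : Submodule F (ι → F)) :
    ∃ (n' : ℕ) (C' : Submodule F (Fin n' → F)),
      Module.finrank F C' = Module.finrank F D ∧
      {w : ℕ | ∃ c ∈ C', c ≠ 0 ∧ hammingNorm c = w} =
        {w : ℕ | ∃ c ∈ D, c ≠ 0 ∧ hammingNorm c = w} := by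
  classical
  set e : Fin (Fintype.card ι) ≃ ι := (Fintype.equivFin ι).symm
  set ℓ : (ι → F) ≃ₗ[F] (Fin (Fintype.card ι) → F) := LinearEquiv.funCongrLeft F F e
  refine ⟨Fintype.card ι, D.map ℓ.toLinearMap, ?_, ?_⟩
  · exact LinearEquiv.finrank_map_eq ℓ D
  · ext w
    simp only [Set.mem_setOf_eq, Submodule.mem_map]
    constructor
    · rintro ⟨c, ⟨y, hy, rfl⟩, hne, rfl⟩
      refine ⟨y, hy, ?_, ?_⟩
      · rintro rfl; exact hne (map_zero _)
      · exact (hN_comp_equiv e y).symm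
    · rintro ⟨c, hc, hne, rfl⟩
      refine ⟨ℓ c, ⟨c, hc, rfl⟩, ?_, ?_⟩
      · simpa using (ℓ.map_eq_zero_iff).not.mpr hne
      · exact hN_comp_equiv e c

lemma base_sum_inj : ∀ {N B : ℕ} (f g : Fin N → ℕ), (∀ i, f i < B) → (∀ i, g i < B) →
    (∑ i : Fin N, B ^ (i : ℕ) * f i) = (∑ i : Fin N, B ^ (i : ℕ) * g i) → f = g := by
  intro N
  induction N with
  | zero => intro B f g _ _ _; funext i; exact i.elim0
  | succ N ih =>
    intro B f g hf hg h
    have hB : 0 < B := Nat.pos_of_ne_zero (fun h0 => by simpa [h0] using hf 0)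
    have expand : ∀ u : Fin (N+1) → ℕ,
        (∑ i : Fin (N+1), B ^ (i : ℕ) * u i) = u 0 + B * ∑ i : Fin N, B ^ (i : ℕ) * u i.succ := by
      intro u
      rw [Fin.sum_univ_succ, Finset.mul_sum]
      simp only [Fin.val_zero, pow_zero, one_mul, Fin.val_succ]
      congr 1
      refine Finset.sum_congr rfl fun i _ => ?_
      ring
    rw [expand f, expand g] at h
    have h0 : f 0 = g 0 := by
      have := congrArg (· % B) h
      simpa [Nat.add_mul_mod_self_left, Nat.mod_eq_of_lt (hf 0), Nat.mod_eq_of_lt (hg 0)]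
        using this
    have h1 : (∑ i : Fin N, B ^ (i : ℕ) * f i.succ) = ∑ i : Fin N, B ^ (i : ℕ) * g i.succ := by
      have := h
      rw [h0] at this
      have := Nat.add_left_cancel this
      exact Nat.eq_of_mul_eq_mul_left hB this
    have htail := ih (fun i => f i.succ) (fun i => g i.succ)
      (fun i => hf i.succ) (fun i => hg i.succ) h1
    funext i
    refine Fin.cases ?_ ?_ i
    · exact h0
    · intro j; exact congrFun htail j

end Aux

section Constr
variable {F : Type*} [Field F] [Fintype F] [DecidableEq F] {n : ℕ}
variable (C : Submodule F (Fin n → F)) [Fintype ↥C]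

noncomputable def mult (c' : ↥C) : ℕ := (n + 1) ^ ((Fintype.equivFin ↥C) c' : ℕ)

lemma mult_pos (c' : ↥C) : 0 < mult C c' := Nat.pow_pos (Nat.succ_pos n)

noncomputable def Rr : ℕ := ∑ c' : ↥C, mult C c'

lemma Rr_pos : 0 < Rr C :=
  Finset.sum_pos (fun c' _ => mult_pos C c') ⟨0, Finset.mem_univ 0⟩

noncomputable def m0 : ℕ := Rr C * n + 1

noncomputable def L :
    (↥C × F) →ₗ[F] (((Σ _c' : ↥C, Fin (mult C _c') × Fin n) ⊕ Fin (m0 C)) → F) where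
  toFun p := Sum.elim
    (fun q => (p.1 : Fin n → F) q.2.2 - p.2 * (q.1 : Fin n → F) q.2.2) (fun _ => p.2)
  map_add' p q := by
    funext i
    rcases i with ⟨c', j1, j2⟩ | j0 <;>
      simp <;> ring
  map_smul' r p := by
    funext i
    rcases i with ⟨c', j1, j2⟩ | j0 <;>
      simp <;> ring

lemma hN_L (c : ↥C) (a : F) :
    hammingNorm (L C (c, a)) =
      (∑ c' : ↥C, mult C c' * hammingNorm ((c : Fin n → F) - a • (c' : Fin n → F)))
      + (if a = 0 then 0 else m0 C) := by
  rw [hN_eq_sum, Fintype.sum_sum_type]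
  congr 1
  · rw [← Finset.univ_sigma_univ, Finset.sum_sigma]
    refine Finset.sum_congr rfl fun c' _ => ?_
    rw [Fintype.sum_prod_type]
    have hinner : ∀ j1 : Fin (mult C c'),
        (∑ j2 : Fin n, if (L C (c, a)) (Sum.inl ⟨c', (j1, j2)⟩) ≠ 0 then 1 else 0)
          = hammingNorm ((c : Fin n → F) - a • (c' : Fin n → F)) := by
      intro j1
      rw [hN_eq_sum]
      refine Finset.sum_congr rfl fun j2 _ => ?_
      have hco : (L C (c, a)) (Sum.inl ⟨c', (j1, j2)⟩)
          = ((c : Fin n → F) - a • (c' : Fin n → F)) j2 := by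
        simp [L]
      rw [hco]
    rw [Finset.sum_congr rfl fun j1 _ => hinner j1]
    simp [mul_comm]
  · rcases eq_or_ne a 0 with rfl | ha
    · simp [L]
    · simp [L, ha]

lemma hN_L_zero (c : ↥C) :
    hammingNorm (L C (c, 0)) = Rr C * hammingNorm (c : Fin n → F) := by
  rw [hN_L, if_pos rfl, add_zero, Rr, Finset.sum_mul]
  refine Finset.sum_congr rfl fun c' _ => ?_
  rw [zero_smul, sub_zero]

noncomputable def Tm (v : Fin n → F) : ℕ :=
  ∑ c' : ↥C, mult C c' * hammingNorm (v - (c' : Fin n → F))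

lemma hN_L_ne (c : ↥C) {a : F} (ha : a ≠ 0) :
    hammingNorm (L C (c, a)) = Tm C (a⁻¹ • (c : Fin n → F)) + m0 C := by
  rw [hN_L, if_neg ha, Tm]
  congr 1
  refine Finset.sum_congr rfl fun c' _ => ?_
  congr 1
  have hv : (c : Fin n → F) - a • (c' : Fin n → F)
      = a • (a⁻¹ • (c : Fin n → F) - (c' : Fin n → F)) := by
    rw [smul_sub, smul_smul, mul_inv_cancel₀ ha, one_smul]
  rw [hv]
  exact hammingNorm_smul (fun _ => fun x y h => mul_left_cancel₀ ha h) _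

lemma Tm_rewrite (v : Fin n → F) :
    Tm C v = ∑ i : Fin (Fintype.card ↥C),
      (n + 1) ^ (i : ℕ) * hammingNorm (v - (((Fintype.equivFin ↥C).symm i : ↥C) : Fin n → F)) := by
  rw [Tm, ← Equiv.sum_comp (Fintype.equivFin ↥C).symm
    (fun c' => mult C c' * hammingNorm (v - (c' : Fin n → F)))]
  refine Finset.sum_congr rfl fun i _ => ?_
  rw [mult, Equiv.apply_symm_apply]

lemma Tm_inj (d e : ↥C) (h : Tm C (d : Fin n → F) = Tm C (e : Fin n → F)) : d = e := by
  rw [Tm_rewrite, Tm_rewrite] at h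
  have key := base_sum_inj
    (fun i => hammingNorm ((d : Fin n → F) - (((Fintype.equivFin ↥C).symm i : ↥C) : Fin n → F)))
    (fun i => hammingNorm ((e : Fin n → F) - (((Fintype.equivFin ↥C).symm i : ↥C) : Fin n → F)))
    (fun i => Nat.lt_succ_of_le (hammingNorm_le_card_fintype.trans_eq (Fintype.card_fin n)))
    (fun i => Nat.lt_succ_of_le (hammingNorm_le_card_fintype.trans_eq (Fintype.card_fin n)))
    h
  have h2 := congrFun key (Fintype.equivFin ↥C d)
  simp only [Equiv.symm_apply_apply] at h2
  rw [sub_self, hammingNorm_zero] at h2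
  have h3 : (e : Fin n → F) - (d : Fin n → F) = 0 := hammingNorm_eq_zero.mp h2.symm
  have h4 : (e : Fin n → F) = (d : Fin n → F) := by
    rwa [sub_eq_zero] at h3
  exact (Subtype.ext h4).symm

lemma L_inj : Function.Injective (L C) := by
  rw [injective_iff_map_eq_zero]
  rintro ⟨c, a⟩ h
  have ha : a = 0 := by
    have := congrFun h (Sum.inr ⟨0, Nat.succ_pos _⟩)
    simpa [L] using this
  have hc : (c : Fin n → F) = 0 := by
    funext j
    have := congrFun h (Sum.inl ⟨0, (⟨0, mult_pos C 0⟩, j)⟩)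
    simpa [L, ha] using this
  exact Prod.ext (by simpa using hc) ha

end Constr

theorem add_qk_weights {F : Type*} [Field F] [Fintype F] [DecidableEq F] (k s : ℕ)
    (h : ∃ (n : ℕ) (C : Submodule F (Fin n → F)), Module.finrank F C = k ∧
      {w : ℕ | ∃ c ∈ C, c ≠ 0 ∧ hammingNorm c = w}.ncard = s) :
    ∃ (n' : ℕ) (C' : Submodule F (Fin n' → F)), Module.finrank F C' = k + 1 ∧
      {w : ℕ | ∃ c ∈ C', c ≠ 0 ∧ hammingNorm c = w}.ncard = Fintype.card F ^ k + s := by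
  classical
  obtain ⟨n, C, hk, hs⟩ := h
  haveI : Fintype ↥C := Fintype.ofFinite _
  obtain ⟨n', C', hrank, hset⟩ := exists_code_fin (LinearMap.range (L C))
  refine ⟨n', C', ?_, ?_⟩
  · rw [hrank, LinearMap.finrank_range_of_inj (L_inj C), Module.finrank_prod, hk,
      Module.finrank_self]
  · rw [hset]
    have hW : {w : ℕ | ∃ z ∈ LinearMap.range (L C), z ≠ 0 ∧ hammingNorm z = w}
        = ((fun d : ↥C => Tm C (d : Fin n → F) + m0 C) '' Set.univ)
          ∪ ((fun w => Rr C * w) '' {w : ℕ | ∃ c ∈ C, c ≠ 0 ∧ hammingNorm c = w}) := by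
      ext w
      simp only [Set.mem_setOf_eq, Set.mem_union, Set.mem_image, Set.mem_univ, true_and,
        LinearMap.mem_range]
      constructor
      · rintro ⟨z, ⟨⟨c, a⟩, rfl⟩, hz, rfl⟩
        rcases eq_or_ne a 0 with rfl | ha
        · right
          refine ⟨hammingNorm (c : Fin n → F), ⟨(c : Fin n → F), c.2, ?_, rfl⟩,
            (hN_L_zero C c).symm⟩
          intro h0
          apply hz
          have hc0 : (c, (0 : F)) = (0 : ↥C × F) := Prod.ext (Subtype.ext h0) rfl
          rw [hc0, map_zero]
        · left
          exact ⟨⟨a⁻¹ • (c : Fin n → F), C.smul_mem _ c.2⟩, (hN_L_ne C c ha).symm⟩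
      · rintro (⟨d, rfl⟩ | ⟨w0, ⟨c0, hc0, hc0ne, rfl⟩, rfl⟩)
        · refine ⟨L C (d, 1), ⟨(d, 1), rfl⟩, ?_, ?_⟩
          · intro h0
            have := L_inj C (h0.trans (map_zero (L C)).symm)
            exact one_ne_zero (congrArg Prod.snd this)
          · rw [hN_L_ne C d one_ne_zero, inv_one, one_smul]
        · refine ⟨L C (⟨c0, hc0⟩, 0), ⟨(⟨c0, hc0⟩, 0), rfl⟩, ?_, hN_L_zero C _⟩
          intro h0
          have := L_inj C (h0.trans (map_zero (L C)).symm)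
          exact hc0ne (by simpa using congrArg (fun p => ((p.1 : ↥C) : Fin n → F)) this)
    rw [hW]
    have hWfin : {w : ℕ | ∃ c ∈ C, c ≠ 0 ∧ hammingNorm c = w}.Finite := by
      apply (Set.finite_Iic n).subset
      rintro w ⟨c, _, _, rfl⟩
      exact Set.mem_Iic.mpr (hammingNorm_le_card_fintype.trans_eq (Fintype.card_fin n))
    have hTinj : Function.Injective (fun d : ↥C => Tm C (d : Fin n → F) + m0 C) := by
      intro d e hde
      exact Tm_inj C d e (Nat.add_right_cancel hde)
    have hdisj : Disjoint ((fun d : ↥C => Tm C (d : Fin n → F) + m0 C) '' Set.univ)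
        ((fun w => Rr C * w) '' {w : ℕ | ∃ c ∈ C, c ≠ 0 ∧ hammingNorm c = w}) := by
      rw [Set.disjoint_left]
      rintro w ⟨d, -, rfl⟩ ⟨w0, ⟨c0, _, _, rfl⟩, heq⟩
      have hb : hammingNorm c0 ≤ n :=
        hammingNorm_le_card_fintype.trans_eq (Fintype.card_fin n)
      have hmul : Rr C * hammingNorm c0 ≤ Rr C * n := Nat.mul_le_mul_left _ hb
      have hm0 : m0 C = Rr C * n + 1 := rfl
      have heq' : Rr C * hammingNorm c0 = Tm C (d : Fin n → F) + m0 C := heq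
      omega
    rw [Set.ncard_union_eq hdisj (Set.finite_univ.image _) (hWfin.image _),
      Set.ncard_image_of_injective _ hTinj,
      Set.ncard_image_of_injective _
        (fun x y hxy => Nat.eq_of_mul_eq_mul_left (Rr_pos C) hxy),
      Set.ncard_univ, Nat.card_eq_fintype_card, hs]
    congr 1
    rw [Module.card_eq_pow_finrank (K := F) (V := ↥C), hk]
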